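/- Let A1 and A2 be nonempty finite sets, let U : A1 × A2 → ℝ, and let y0 ∈ A2. Suppose y0 is not weakly dominated by any mixed strategy over the remaining actions: for every mixed strategy η over A2 \ {y0} there exists some x ∈ A1 with Σ_{y ≠ y0} η(y)·U(x,y) < U(x,y0). Then there exist a mixed strategy x̄ over A1 and a real c > 0 such that for every y ∈ A2 with y ≠ y0, Σ_{x ∈ A1} x̄(x)·U(x,y0) ≥ Σ_{x ∈ A1} x̄(x)·U(x,y) + c; that is, y0 is the strict best response to x̄ with margin at least c. -/

import Mathlib

/-!
Statement 5 (Farkas-lemma step): if a pure follower action `y0` is not weakly dominated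
by any mixed strategy over the remaining actions, then `y0` is the strict best response,
with a positive margin, to some mixed strategy of the leader.
-/

/-- A mixed strategy on a finite set: nonnegative and summing to 1. -/
def IsMixed {S : Type*} [Fintype S] (p : S → ℝ) : Prop :=
  (∀ s, 0 ≤ p s) ∧ ∑ s, p s = 1

theorem strict_best_response_of_not_weakly_dominated
    {A1 A2 : Type*} [Fintype A1] [Fintype A2] [Nonempty A1] [Nonempty A2] [DecidableEq A2]
    (U : A1 → A2 → ℝ) (y0 : A2)
    (hnd : ∀ η : A2 → ℝ, (∀ y, 0 ≤ η y) → (∑ y ∈ Finset.univ.erase y0, η y) = 1 →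
      ∃ x : A1, (∑ y ∈ Finset.univ.erase y0, η y * U x y) < U x y0) :
    ∃ (xb : A1 → ℝ) (c : ℝ), IsMixed xb ∧ 0 < c ∧
      ∀ y : A2, y ≠ y0 →
        (∑ a, xb a * U a y0) ≥ (∑ a, xb a * U a y) + c := by
  classical
  by_cases hA : Nonempty {y : A2 // y ≠ y0}
  case neg =>
    refine ⟨fun _ => (Fintype.card A1 : ℝ)⁻¹, 1, ⟨fun _ => by positivity, ?_⟩, one_pos,
      fun y hy => (hA ⟨⟨y, hy⟩⟩).elim⟩
    have hcard : (Fintype.card A1 : ℝ) ≠ 0 := Nat.cast_ne_zero.mpr Fintype.card_ne_zero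
    simp [Finset.sum_const, Finset.card_univ, nsmul_eq_mul, mul_inv_cancel₀ hcard]
  case pos =>
    haveI := hA
    set A2' := {y : A2 // y ≠ y0} with hA2'
    set g : A1 → (A2' → ℝ) := fun x y => U x y0 - U x y.1 with hg
    set s : Set (A2' → ℝ) := Set.univ.pi (fun _ : A2' => Set.Ioi (0 : ℝ)) with hs
    have hmem_s : ∀ z : A2' → ℝ, z ∈ s ↔ ∀ y, 0 < z y := by
      intro z; simp [hs, Set.mem_pi]
    set L : (A1 → ℝ) → (A2' → ℝ) := fun w => ∑ x, w x • g x with hL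
    set t : Set (A2' → ℝ) := L '' stdSimplex ℝ A1 with ht
    have hsopen : IsOpen s := isOpen_set_pi Set.finite_univ (fun _ _ => isOpen_Ioi)
    have hsconv : Convex ℝ s := convex_pi (fun _ _ => convex_Ioi 0)
    have hLlin : IsLinearMap ℝ L := by
      constructor
      · intro w v
        simp only [hL, Pi.add_apply, add_smul, Finset.sum_add_distrib]
      · intro c w
        rw [hL]
        dsimp only
        rw [Finset.smul_sum]
        apply Finset.sum_congr rfl
        intro x _
        rw [Pi.smul_apply, smul_eq_mul, mul_smul]
    have htconv : Convex ℝ t := (convex_stdSimplex ℝ A1).is_linear_image hLlin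
    by_cases hdis : Disjoint s t
    · exfalso
      obtain ⟨f, u, hfs, hft⟩ := geometric_hahn_banach_open hsconv hsopen htconv hdis
      -- on the open positive orthant, f ≤ 0
      have hcone : ∀ z : A2' → ℝ, (∀ y, 0 < z y) → f z ≤ 0 := by
        intro z hz
        by_contra h
        push_neg at h
        have hlam : 0 < (max u 0 + 1) / f z := by
          have : (0:ℝ) < max u 0 + 1 := by positivity
          exact div_pos this h
        have hmem : ((max u 0 + 1) / f z) • z ∈ s := by
          rw [hmem_s]; intro y; exact mul_pos hlam (hz y)
        have h2 := hfs _ hmem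
        rw [map_smul, smul_eq_mul, div_mul_cancel₀ _ (ne_of_gt h)] at h2
        have := le_max_left u 0
        linarith
      have hones : ∀ y : A2', (0:ℝ) < (fun _ : A2' => (1:ℝ)) y := fun _ => one_pos
      have hfones : f (fun _ : A2' => (1:ℝ)) ≤ 0 := hcone _ hones
      -- on the closed positive orthant, f ≤ 0
      have hnonneg : ∀ z : A2' → ℝ, (∀ y, 0 ≤ z y) → f z ≤ 0 := by
        intro z hz
        by_contra h
        push_neg at h
        set C : ℝ := -(f (fun _ : A2' => (1:ℝ))) with hC
        have hC0 : 0 ≤ C := by linarith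
        have hε : 0 < f z / (C + 1) := div_pos h (by linarith)
        have h2 : f (z + (f z / (C + 1)) • (fun _ : A2' => (1:ℝ))) ≤ 0 := by
          apply hcone
          intro y
          have : (0:ℝ) < f z / (C + 1) * 1 := by simpa using hε
          exact add_pos_of_nonneg_of_pos (hz y) (by simpa using this)
        rw [map_add, map_smul, smul_eq_mul] at h2
        have h3 : f z ≤ f z / (C + 1) * C := by
          have : f (fun _ : A2' => (1:ℝ)) = -C := by rw [hC]; ring
          rw [this] at h2; linarith
        have h4 : f z / (C + 1) * C < f z := by
          rw [div_mul_eq_mul_div, div_lt_iff₀ (by linarith)]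
          nlinarith
        linarith
      -- u is nonnegative
      have hu : 0 ≤ u := by
        by_contra h
        push_neg at h
        rcases eq_or_lt_of_le hfones with heq | hlt
        · have := hfs _ ((hmem_s _).mpr hones)
          rw [heq] at this
          linarith
        · set lam : ℝ := u / (2 * f (fun _ : A2' => (1:ℝ))) with hlam
          have hlampos : 0 < lam := div_pos_of_neg_of_neg h (by linarith)
          have hmem : lam • (fun _ : A2' => (1:ℝ)) ∈ s := by
            rw [hmem_s]; intro y
            rw [Pi.smul_apply, smul_eq_mul]
            exact mul_pos hlampos one_pos
          have h2 := hfs _ hmem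
          rw [map_smul, smul_eq_mul] at h2
          have hne : f (fun _ : A2' => (1:ℝ)) ≠ 0 := ne_of_lt hlt
          have : lam * f (fun _ : A2' => (1:ℝ)) = u / 2 := by
            rw [hlam]; field_simp
          rw [this] at h2
          linarith
      -- expansion of f in coordinates
      set e : A2' → (A2' → ℝ) := fun y j => if j = y then 1 else 0 with he
      have hexp : ∀ z : A2' → ℝ, f z = ∑ y : A2', z y * f (e y) := by
        intro z
        have hz : z = ∑ y : A2', z y • e y := by
          ext j
          rw [Finset.sum_apply]
          simp [he, mul_ite]
          rw [Finset.sum_eq_single j (fun b _ hb => by simp [Ne.symm hb]) (by simp)]; simp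
        conv_lhs => rw [hz]
        rw [map_sum]
        simp [smul_eq_mul]
      set β : A2' → ℝ := fun y => -(f (e y)) with hβ
      have hβ0 : ∀ y, 0 ≤ β y := by
        intro y
        have := hnonneg (e y) (by
          intro j
          simp only [he]
          split <;> norm_num)
        simp only [hβ]; linarith
      set S : ℝ := ∑ y : A2', β y with hS
      have hS0 : 0 ≤ S := Finset.sum_nonneg (fun y _ => hβ0 y)
      -- t is nonempty: indicator strategies are in stdSimplex
      have hind : ∀ x0 : A1, (fun x => if x = x0 then (1:ℝ) else 0) ∈ stdSimplex ℝ A1 := by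
        intro x0
        constructor
        · intro x; dsimp only; split <;> norm_num
        · simp
      have hgt : ∀ x0 : A1, g x0 ∈ t := by
        intro x0
        refine ⟨fun x => if x = x0 then (1:ℝ) else 0, hind x0, ?_⟩
        simp [hL, ite_smul]
      have hSpos : 0 < S := by
        rcases eq_or_lt_of_le hS0 with heq | h; swap
        · exact h
        exfalso
        have hall : ∀ y ∈ Finset.univ, β y = 0 := by
          rw [← Finset.sum_eq_zero_iff_of_nonneg (fun y _ => hβ0 y)]
          exact heq.symm
        have hfzero : ∀ z : A2' → ℝ, f z = 0 := by
          intro z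
          rw [hexp]
          apply Finset.sum_eq_zero
          intro y _
          have := hall y (Finset.mem_univ y)
          have hfy : f (e y) = 0 := by
            simp only [hβ] at this; linarith
          rw [hfy, mul_zero]
        have h1 := hfs _ ((hmem_s _).mpr hones)
        have h2 := hft _ (hgt (Classical.arbitrary A1))
        rw [hfzero] at h1
        rw [hfzero] at h2
        linarith
      -- build the dominating mixed strategy and contradict hnd
      set η : A2 → ℝ := fun y => if h : y = y0 then 0 else β ⟨y, h⟩ / S with hη
      have hsum_sub : ∀ F : A2 → ℝ, (∑ y ∈ Finset.univ.erase y0, F y) = ∑ y : A2', F y.1 := by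
        intro F
        exact Finset.sum_subtype _ (by simp [Finset.mem_erase]) F
      have hηsum : (∑ y ∈ Finset.univ.erase y0, η y) = 1 := by
        rw [hsum_sub]
        have : ∀ y : A2', η y.1 = β y / S := by
          intro y
          simp only [hη]; rw [dif_neg y.2]
        rw [Finset.sum_congr rfl (fun y _ => this y), ← Finset.sum_div]
        exact div_self (ne_of_gt hSpos)
      obtain ⟨x, hx⟩ := hnd η (by
        intro y; simp only [hη]
        split
        · exact le_refl 0
        · exact div_nonneg (hβ0 _) hS0) hηsum
      -- but f (g x) ≥ u ≥ 0 gives the opposite inequality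
      have h2 := le_trans hu (hft _ (hgt x))
      rw [hexp] at h2
      have h3 : (∑ y : A2', (U x y0 - U x y.1) * (-(β y))) = -(∑ y : A2', β y * (U x y0 - U x y.1)) := by
        rw [← Finset.sum_neg_distrib]
        apply Finset.sum_congr rfl
        intro y _; ring
      have h4 : (0:ℝ) ≤ -(∑ y : A2', β y * (U x y0 - U x y.1)) := by
        rw [← h3]
        refine le_trans h2 (le_of_eq ?_)
        apply Finset.sum_congr rfl
        intro y _
        have : f (e y) = -(β y) := by simp only [hβ, neg_neg]
        rw [this]
      have h5 : S * U x y0 ≤ ∑ y : A2', β y * U x y.1 := by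
        have : (∑ y : A2', β y * (U x y0 - U x y.1))
            = S * U x y0 - ∑ y : A2', β y * U x y.1 := by
          rw [hS, Finset.sum_mul, ← Finset.sum_sub_distrib]
          apply Finset.sum_congr rfl
          intro y _; ring
        linarith [h4, this]
      rw [hsum_sub] at hx
      have h6 : (∑ y : A2', η y.1 * U x y.1) = (∑ y : A2', β y * U x y.1) / S := by
        rw [Finset.sum_div]
        apply Finset.sum_congr rfl
        intro y _
        simp only [hη]; rw [dif_neg y.2]; ring
      rw [h6] at hx
      rw [div_lt_iff₀ hSpos] at hx
      nlinarith
    · -- not disjoint: extract the strictly dominating mixed strategy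
      obtain ⟨z, hzs, hzt⟩ := Set.not_disjoint_iff.mp hdis
      obtain ⟨w, hw, hwz⟩ := hzt
      rw [hmem_s] at hzs
      set c : ℝ := Finset.univ.inf' Finset.univ_nonempty (fun y : A2' => z y) with hc
      have hcpos : 0 < c := by
        rw [hc, Finset.lt_inf'_iff]
        exact fun y _ => hzs y
      refine ⟨w, c, ⟨hw.1, hw.2⟩, hcpos, ?_⟩
      intro y hy
      have hle : c ≤ z ⟨y, hy⟩ := Finset.inf'_le _ (Finset.mem_univ _)
      have hzeq : z ⟨y, hy⟩ = ∑ a, w a * (U a y0 - U a y) := by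
        rw [← hwz]
        simp only [hL]
        rw [Finset.sum_apply]
        apply Finset.sum_congr rfl
        intro a _
        simp [hg]
      have : (∑ a, w a * (U a y0 - U a y)) = (∑ a, w a * U a y0) - ∑ a, w a * U a y := by
        rw [← Finset.sum_sub_distrib]
        apply Finset.sum_congr rfl
        intro a _; ring
      rw [hzeq, this] at hle
      linarith
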